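/- Let τ : M₃ × ℝ³ → ℝ be twice continuously differentiable, and let V : ℝ³ → ℝ³ be a linear map such that the partial gradient of τ with respect to p satisfies ∂_p τ(F, p) = V p for every (F, p) ∈ M₃ × ℝ³ (in particular, it is independent of F). Then, with σ(F) := τ(F, 0) and κ(p) := (1/2)⟨p, V p⟩, one has τ(F, p) = σ(F) + κ(p) for all (F, p). Moreover, the partial (Frobenius) gradient of τ with respect to F satisfies ∂_F τ(F, p) = ∇σ(F) for all (F,p), i.e., the stress S = ∂_F τ depends only on F and is the gradient of the stored energy σ. -/

import Mathlib

open scoped RealInnerProductSpace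

noncomputable section

abbrev M3 : Type := EuclideanSpace ℝ (Fin 3 × Fin 3)
abbrev R3 : Type := EuclideanSpace ℝ (Fin 3)

/-- Proposition 4 together with (3.25): if the velocity mapping `∂ₚτ(F,p) = V p`
(independent of `F`), then the total energy splits as stored energy `σ(F) = τ(F,0)`
plus kinetic energy `κ(p) = ½⟨p, Vp⟩`, and the stress `S = ∂_F τ` depends only on `F`,
being the gradient of the stored energy. -/
theorem stmt9 (τ : M3 × R3 → ℝ) (hτ : ContDiff ℝ 2 τ)
    (V : R3 →L[ℝ] R3)
    (h : ∀ (F : M3) (p : R3), gradient (fun q => τ (F, q)) p = V p) :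
    (∀ (F : M3) (p : R3), τ (F, p) = τ (F, 0) + (1 / 2) * ⟪p, V p⟫) ∧
    (∀ (F : M3) (p : R3),
      gradient (fun G => τ (G, p)) F = gradient (fun G => τ (G, 0)) F) := by
  have hdiff : Differentiable ℝ τ := hτ.differentiable two_ne_zero
  have hdF : ∀ F : M3, Differentiable ℝ (fun q : R3 => τ (F, q)) := fun F =>
    hdiff.comp ((differentiable_const F).prodMk differentiable_id)
  have hfd : ∀ (F : M3) (x : R3),
      fderiv ℝ (fun q : R3 => τ (F, q)) x = InnerProductSpace.toDual ℝ R3 (V x) := by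
    intro F x
    have := congrArg (InnerProductSpace.toDual ℝ R3) (h F x)
    rwa [gradient, LinearIsometryEquiv.apply_symm_apply] at this
  have key : ∀ (F : M3) (p : R3), τ (F, p) = τ (F, 0) + (1 / 2) * ⟪p, V p⟫ := by
    intro F p
    set c : ℝ := ⟪p, V p⟫ with hc
    set ψ : ℝ → ℝ := fun t => τ (F, t • p) - t ^ 2 / 2 * c with hψ
    have hder : ∀ t : ℝ, HasDerivAt ψ 0 t := by
      intro t
      have h1 : HasDerivAt (fun t : ℝ => t • p) p t := by
        simpa using (hasDerivAt_id t).smul_const p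
      have h2 : HasDerivAt (fun t : ℝ => τ (F, t • p))
          (fderiv ℝ (fun q : R3 => τ (F, q)) (t • p) p) t :=
        ((hdF F).differentiableAt.hasFDerivAt).comp_hasDerivAt t h1
      rw [hfd] at h2
      have h2' : HasDerivAt (fun t : ℝ => τ (F, t • p)) (t * c) t := by
        convert h2 using 1
        rw [InnerProductSpace.toDual_apply_apply, map_smul, real_inner_smul_left,
          real_inner_comm]
      have h3 : HasDerivAt (fun t : ℝ => t ^ 2 / 2 * c) (t * c) t := by
        have : HasDerivAt (fun t : ℝ => t ^ 2 / 2 * c) (2 * t ^ 1 / 2 * c) t := by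
          exact (((hasDerivAt_pow 2 t).div_const 2).mul_const c)
        simpa using this
      have h4 := h2'.sub h3
      rw [sub_self] at h4
      exact h4
    have hconst : ψ 1 = ψ 0 :=
      is_const_of_deriv_eq_zero (fun t => (hder t).differentiableAt)
        (fun t => (hder t).deriv) 1 0
    simp only [hψ, one_smul, zero_smul, one_pow] at hconst
    norm_num at hconst
    linarith
  refine ⟨key, fun F p => ?_⟩
  have hfun : (fun G : M3 => τ (G, p)) =
      fun G : M3 => τ (G, 0) + (1 / 2) * ⟪p, V p⟫ := funext fun G => key G p
  rw [gradient, gradient, hfun, fderiv_add_const]
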